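/- Let f(x) = ∑_{k=t}^{L} c(k) x^k with c(k) ≥ 0, t ≥ 2, and fix ε ∈ (0,1) and p ≥ 0 with f(f(p)) ≤ ε f(p). Define Γ_1 = f(p) and Γ_{m+1} = f(Γ_m). Then for all m ≥ 2, Γ_m ≤ ε^(t^(m-2)) Γ_1, and in particular lim_{m→∞} Γ_m = 0. -/

import Mathlib

open Filter

/-- Doubly-exponential decay of level-`m` logical error bounds below the
crossing point of the level-1 and level-2 bounding polynomials. -/
theorem stmt_14 (t L : ℕ) (ht : 2 ≤ t) (c : ℕ → ℝ) (hc : ∀ k, 0 ≤ c k)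
    (f : ℝ → ℝ) (hf : ∀ x, f x = ∑ k ∈ Finset.Icc t L, c k * x ^ k)
    (ε p : ℝ) (hε0 : 0 < ε) (hε1 : ε < 1) (hp : 0 ≤ p)
    (hcross : f (f p) ≤ ε * f p)
    (Γ : ℕ → ℝ) (hΓ1 : Γ 1 = f p) (hΓ : ∀ m, Γ (m + 1) = f (Γ m)) :
    (∀ m : ℕ, 2 ≤ m → Γ m ≤ ε ^ (t ^ (m - 2)) * Γ 1) ∧
    Tendsto Γ atTop (nhds 0) := by
  have hfnn : ∀ x : ℝ, 0 ≤ x → 0 ≤ f x := by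
    intro x hx
    rw [hf]
    exact Finset.sum_nonneg fun k _ => mul_nonneg (hc k) (pow_nonneg hx k)
  have hfmono : ∀ x y : ℝ, 0 ≤ x → x ≤ y → f x ≤ f y := by
    intro x y hx hxy
    rw [hf, hf]
    exact Finset.sum_le_sum fun k _ =>
      mul_le_mul_of_nonneg_left (pow_le_pow_left₀ hx hxy k) (hc k)
  have hscale : ∀ a x : ℝ, 0 ≤ a → a ≤ 1 → 0 ≤ x → f (a * x) ≤ a ^ t * f x := by
    intro a x ha ha1 hx
    rw [hf, hf, Finset.mul_sum]
    refine Finset.sum_le_sum fun k hk => ?_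
    have htk : t ≤ k := (Finset.mem_Icc.mp hk).1
    have hak : a ^ k ≤ a ^ t := pow_le_pow_of_le_one ha ha1 htk
    calc c k * (a * x) ^ k = a ^ k * (c k * x ^ k) := by rw [mul_pow]; ring
      _ ≤ a ^ t * (c k * x ^ k) :=
        mul_le_mul_of_nonneg_right hak (mul_nonneg (hc k) (pow_nonneg hx k))
  -- nonnegativity of Γ for m ≥ 1
  have hΓnn : ∀ n : ℕ, 0 ≤ Γ (n + 1) := by
    intro n
    induction n with
    | zero => rw [hΓ1]; exact hfnn p hp
    | succ k ih => rw [hΓ]; exact hfnn _ ih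
  have hε0' : (0:ℝ) ≤ ε := le_of_lt hε0
  have hεpow : ∀ n : ℕ, 0 ≤ ε ^ n ∧ ε ^ n ≤ 1 := fun n =>
    ⟨pow_nonneg hε0' n, pow_le_one₀ hε0' (le_of_lt hε1)⟩
  have hΓ1nn : 0 ≤ Γ 1 := hΓnn 0
  have key : ∀ n : ℕ, Γ (n + 2) ≤ ε ^ (t ^ n) * Γ 1 := by
    intro n
    induction n with
    | zero =>
      rw [show (0:ℕ)+2 = 1+1 from rfl, hΓ 1, hΓ1, pow_zero, pow_one]
      exact hcross
    | succ k ih =>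
      have h1 : Γ (k + 3) = f (Γ (k + 2)) := hΓ (k + 2)
      have h2 : f (Γ (k + 2)) ≤ f (ε ^ (t ^ k) * Γ 1) :=
        hfmono _ _ (hΓnn (k + 1)) ih
      have h3 : f (ε ^ (t ^ k) * Γ 1) ≤ (ε ^ (t ^ k)) ^ t * f (Γ 1) :=
        hscale _ _ (hεpow _).1 (hεpow _).2 hΓ1nn
      have h4 : f (Γ 1) ≤ ε * Γ 1 := by rw [hΓ1]; exact hcross
      have h5 : (ε ^ (t ^ k)) ^ t * f (Γ 1) ≤ (ε ^ (t ^ k)) ^ t * (ε * Γ 1) :=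
        mul_le_mul_of_nonneg_left h4 (pow_nonneg (hεpow _).1 t)
      have h6 : (ε ^ (t ^ k)) ^ t * (ε * Γ 1) ≤ ε ^ (t ^ (k + 1)) * Γ 1 := by
        rw [← pow_mul, pow_succ]
        have : ε ^ (t ^ k * t) * (ε * Γ 1) ≤ ε ^ (t ^ k * t) * (1 * Γ 1) :=
          mul_le_mul_of_nonneg_left
            (mul_le_mul_of_nonneg_right (le_of_lt hε1) hΓ1nn)
            (hεpow _).1
        simpa using this
      calc Γ (k + 1 + 2) = f (Γ (k + 2)) := h1
        _ ≤ _ := le_trans h2 (le_trans h3 (le_trans h5 h6))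
  have main : ∀ m : ℕ, 2 ≤ m → Γ m ≤ ε ^ (t ^ (m - 2)) * Γ 1 := by
    intro m hm
    obtain ⟨n, rfl⟩ := Nat.exists_eq_add_of_le hm
    simpa [Nat.add_sub_cancel_left, add_comm] using key n
  refine ⟨main, ?_⟩
  -- squeeze
  have hub : Tendsto (fun m : ℕ => ε ^ (t ^ (m - 2)) * Γ 1) atTop (nhds 0) := by
    have h1 : Tendsto (fun m : ℕ => t ^ (m - 2)) atTop atTop :=
      (tendsto_pow_atTop_atTop_of_one_lt (lt_of_lt_of_le one_lt_two ht)).comp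
        (tendsto_sub_atTop_nat 2)
    have h2 : Tendsto (fun n : ℕ => ε ^ n) atTop (nhds 0) :=
      tendsto_pow_atTop_nhds_zero_of_lt_one hε0' hε1
    have := (h2.comp h1).mul_const (Γ 1)
    simpa using this
  apply squeeze_zero' (t₀ := atTop) ?_ ?_ hub
  · filter_upwards [eventually_ge_atTop 1] with m hm
    obtain ⟨n, rfl⟩ := Nat.exists_eq_add_of_le hm
    simpa [add_comm] using hΓnn n
  · filter_upwards [eventually_ge_atTop 2] with m hm
    exact main m hm
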